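/- Let k ∈ ℕ, let S, B₁, …, B_k be integers, let I ⊆ {1,…,k}, and let t be a positive integer. Define 4-dimensional integer vectors u₀ = (1, S, 0, -S)ᵀ and, for 1 ≤ i ≤ k, u_i = u_{i-1} if i ∉ I, and u_i = (1, x − B_i, 0, B_i − x)ᵀ where u_{i-1} = (1, x, 0, -x)ᵀ, if i ∈ I. Let E(t) be the 4×4 matrix [[1,0,0,0],[0,t,0,0],[0,1-t,1,1-t],[0,0,0,t]] (written row by row), and let S_I = ∑_{i∈I} B_i. Then: u_k = (1, S − S_I, 0, S_I − S)ᵀ; E(t)·u_k = (1, t(S − S_I), 0, t(S_I − S))ᵀ; the weight |first entry|/ℓ₁-norm of E(t)·u_k equals 1/(1 + 2t·|S − S_I|); this weight equals 1 if S = S_I, and is at most 1/(2t + 1) if S ≠ S_I. -/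

import Mathlib

open Matrix Finset

/-- The error-reduction operator `E(t)`. -/
def opE (t : ℤ) : Matrix (Fin 4) (Fin 4) ℤ :=
  !![1, 0, 0, 0; 0, t, 0, 0; 0, 1 - t, 1, 1 - t; 0, 0, 0, t]

theorem subsetsum_verification (k : ℕ) (S : ℤ) (B : Fin k → ℤ) (I : Finset (Fin k))
    (t : ℤ) (ht : 0 < t) (u : ℕ → Fin 4 → ℤ)
    (hu0 : u 0 = ![1, S, 0, -S])
    (hu : ∀ i : Fin k,
      u (i + 1) = if i ∈ I then ![1, u i 1 - B i, 0, B i - u i 1] else u i) :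
    u k = ![1, S - ∑ i ∈ I, B i, 0, (∑ i ∈ I, B i) - S] ∧
    (opE t).mulVec (u k)
      = ![1, t * (S - ∑ i ∈ I, B i), 0, t * ((∑ i ∈ I, B i) - S)] ∧
    ((|((opE t).mulVec (u k)) 0| : ℝ) / ((∑ j : Fin 4, |((opE t).mulVec (u k)) j| : ℤ) : ℝ)
      = 1 / (1 + 2 * (t : ℝ) * ((|S - ∑ i ∈ I, B i| : ℤ) : ℝ))) ∧
    (S = ∑ i ∈ I, B i →
      (|((opE t).mulVec (u k)) 0| : ℝ) / ((∑ j : Fin 4, |((opE t).mulVec (u k)) j| : ℤ) : ℝ)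
        = 1) ∧
    (S ≠ ∑ i ∈ I, B i →
      (|((opE t).mulVec (u k)) 0| : ℝ) / ((∑ j : Fin 4, |((opE t).mulVec (u k)) j| : ℤ) : ℝ)
        ≤ 1 / (2 * (t : ℝ) + 1)) := by
  have key : ∀ n, n ≤ k → u n = ![1, S - ∑ i ∈ I.filter (fun i : Fin k => (i : ℕ) < n), B i, 0,
      (∑ i ∈ I.filter (fun i : Fin k => (i : ℕ) < n), B i) - S] := by
    intro n hn
    induction n with
    | zero => simpa using hu0
    | succ m ih =>
      have hmk : m < k := hn
      have hm := ih (Nat.le_of_succ_le hn)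
      have hstep := hu ⟨m, hmk⟩
      simp only [Fin.val_mk] at hstep
      by_cases hmem : (⟨m, hmk⟩ : Fin k) ∈ I
      · have hf : I.filter (fun i : Fin k => (i : ℕ) < m + 1)
            = insert ⟨m, hmk⟩ (I.filter (fun i : Fin k => (i : ℕ) < m)) := by
          ext i
          simp only [Finset.mem_filter, Finset.mem_insert]
          constructor
          · rintro ⟨hi, hlt⟩
            rcases Nat.lt_succ_iff_lt_or_eq.mp hlt with h | h
            · exact Or.inr ⟨hi, h⟩
            · exact Or.inl (Fin.ext h)
          · rintro (h | ⟨hi, hlt⟩)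
            · subst h; exact ⟨hmem, Nat.lt_succ_self m⟩
            · exact ⟨hi, Nat.lt_succ_of_lt hlt⟩
        have hnotmem : (⟨m, hmk⟩ : Fin k) ∉ I.filter (fun i : Fin k => (i : ℕ) < m) := by
          simp
        rw [hstep, if_pos hmem, hm, hf, Finset.sum_insert hnotmem]
        funext j
        fin_cases j <;> simp <;> ring
      · have hf : I.filter (fun i : Fin k => (i : ℕ) < m + 1)
            = I.filter (fun i : Fin k => (i : ℕ) < m) := by
          ext i
          simp only [Finset.mem_filter]
          constructor
          · rintro ⟨hi, hlt⟩
            rcases Nat.lt_succ_iff_lt_or_eq.mp hlt with h | h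
            · exact ⟨hi, h⟩
            · exact absurd ((show i = ⟨m, hmk⟩ from Fin.ext h) ▸ hi) hmem
          · rintro ⟨hi, hlt⟩
            exact ⟨hi, Nat.lt_succ_of_lt hlt⟩
        rw [hstep, if_neg hmem, hm, hf]
  have hfk : I.filter (fun i : Fin k => (i : ℕ) < k) = I :=
    Finset.filter_true_of_mem fun i _ => i.isLt
  have h1 : u k = ![1, S - ∑ i ∈ I, B i, 0, (∑ i ∈ I, B i) - S] := by
    have := key k le_rfl
    rwa [hfk] at this
  set D : ℤ := S - ∑ i ∈ I, B i with hD
  have h2 : (opE t).mulVec (u k) = ![1, t * (S - ∑ i ∈ I, B i), 0, t * ((∑ i ∈ I, B i) - S)] := by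
    rw [h1]
    funext j
    fin_cases j <;>
      simp [opE, Matrix.mulVec, dotProduct, Fin.sum_univ_four, hD] <;> ring
  have hnorm : (∑ j : Fin 4, |((opE t).mulVec (u k)) j|) = 1 + 2 * t * |D| := by
    rw [h2, Fin.sum_univ_four]
    have h3 : (∑ i ∈ I, B i) - S = -D := by rw [hD]; ring
    simp only [h3]
    have : |t * D| = t * |D| := by
      rw [abs_mul, abs_of_pos ht]
    simp [this]
    rw [abs_of_pos ht, ← hD]
    ring
  have h0 : ((opE t).mulVec (u k)) 0 = 1 := by rw [h2]; rfl
  have htD : (0:ℝ) < 1 + 2 * (t:ℝ) * ((|D| : ℤ) : ℝ) := by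
    have : (0:ℝ) ≤ (t:ℝ) * ((|D| : ℤ) : ℝ) := by
      apply mul_nonneg
      · exact_mod_cast ht.le
      · exact_mod_cast abs_nonneg D
    linarith
  have h3 : (|((opE t).mulVec (u k)) 0| : ℝ) / ((∑ j : Fin 4, |((opE t).mulVec (u k)) j| : ℤ) : ℝ)
      = 1 / (1 + 2 * (t : ℝ) * ((|D| : ℤ) : ℝ)) := by
    rw [h0, hnorm]
    push_cast
    norm_num
  refine ⟨h1, h2, h3, ?_, ?_⟩
  · intro hS
    have : D = 0 := by rw [hD, hS]; ring
    rw [h3, this]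
    norm_num
  · intro hS
    have hD1 : (1:ℤ) ≤ |D| := by
      have : D ≠ 0 := sub_ne_zero.mpr hS
      exact Int.one_le_abs this
    rw [h3]
    apply one_div_le_one_div_of_le
    · positivity
    · have ht' : (1:ℝ) ≤ (t:ℝ) := by exact_mod_cast ht
      have h1' : (1:ℝ) ≤ ((|D| : ℤ) : ℝ) := by exact_mod_cast hD1
      nlinarith
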